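/- Let k be a field. The set of 3×3 matrices of the form [[a, b, c], [0, a², 2ab], [0, 0, a³]] with a ∈ kˣ and b, c ∈ k is a subgroup of GL₃(k), and the group of k-algebra automorphisms of k[X]/(X⁴) is isomorphic, as a group, to this subgroup. -/

import Mathlib

open Polynomial
noncomputable section
namespace Aut4
variable {k : Type} [Field k]
abbrev R (k : Type) [Field k] := AdjoinRoot ((X : k[X]) ^ 4)
def u : R k := AdjoinRoot.root _
lemma hu4 : (u : R k) ^ 4 = 0 := by
  show (AdjoinRoot.mk _ X) ^ 4 = 0
  rw [← map_pow, AdjoinRoot.mk_self]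
lemma hun (n : ℕ) (h : 4 ≤ n) : (u : R k) ^ n = 0 := by
  obtain ⟨m, rfl⟩ := Nat.exists_eq_add_of_le h
  rw [pow_add, hu4, zero_mul]
def am : k →+* R k := algebraMap k (R k)
def v (a b c : k) : R k := am a * u + am b * u ^ 2 + am c * u ^ 3
lemma v_pow4 (a b c : k) : (v a b c) ^ 4 = 0 := by
  have : v a b c = u * (am a + am b * u + am c * u ^ 2) := by rw [v]; ring
  rw [this, mul_pow, hu4, zero_mul]
def φ (a b c : k) : R k →ₐ[k] R k :=
  AdjoinRoot.liftAlgHom _ (Algebra.ofId k _) (v a b c) (by simp [eval₂_pow, eval₂_X, v_pow4])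
lemma u_def : AdjoinRoot.root ((X : k[X]) ^ 4) = (u : R k) := rfl
lemma φ_u (a b c : k) : φ a b c u = v a b c := by
  show AdjoinRoot.liftAlgHom ((X : k[X]) ^ 4) (Algebra.ofId k _) (v a b c) _ (AdjoinRoot.root _) = v a b c
  exact AdjoinRoot.liftAlgHom_root _ _ _ _
lemma φ_comp (a b c a' b' c' : k) :
    (φ a b c).comp (φ a' b' c') =
      φ (a * a') (a' * b + a ^ 2 * b') (a' * c + 2 * a * b * b' + a ^ 3 * c') := by
  apply AdjoinRoot.algHom_ext
  simp only [AlgHom.comp_apply, u_def, φ_u, v, am, map_add, map_mul, map_pow,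
    AlgHom.commutes, map_ofNat]
  have e4 : (u : R k)^4 = 0 := hu4
  have e5 : (u : R k)^5 = 0 := hun 5 (by norm_num)
  have e6 : (u : R k)^6 = 0 := hun 6 (by norm_num)
  have e7 : (u : R k)^7 = 0 := hun 7 (by norm_num)
  have e8 : (u : R k)^8 = 0 := hun 8 (by norm_num)
  have e9 : (u : R k)^9 = 0 := hun 9 (by norm_num)
  ring_nf
  simp only [e4, e5, e6, e7, e8, e9, mul_zero, zero_mul, add_zero, zero_add]
lemma φ_congr {a b c a' b' c' : k} (h1 : a = a') (h2 : b = b') (h3 : c = c') :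
    φ a b c = φ a' b' c' := by rw [h1, h2, h3]
lemma φ_id : φ (1 : k) 0 0 = AlgHom.id k (R k) := by
  apply AdjoinRoot.algHom_ext
  simp only [u_def, φ_u, v, am, map_one, map_zero, AlgHom.id_apply]
  ring
def Φ (a : kˣ) (b c : k) : R k ≃ₐ[k] R k :=
  AlgEquiv.ofAlgHom (φ (a : k) b c)
    (φ ((a : k))⁻¹ (-b * ((a : k))⁻¹ ^ 3) (2*b^2*((a : k))⁻¹^5 - c*((a : k))⁻¹^4))
    (by
      rw [φ_comp, ← φ_id]
      have ha : (a : k) ≠ 0 := a.ne_zero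
      exact φ_congr (by field_simp) (by field_simp; ring) (by field_simp; ring))
    (by
      rw [φ_comp, ← φ_id]
      have ha : (a : k) ≠ 0 := a.ne_zero
      exact φ_congr (by field_simp) (by field_simp; ring) (by field_simp; ring))
lemma Φ_apply (a : kˣ) (b c : k) (x : R k) : Φ a b c x = φ (a : k) b c x := rfl
lemma Φ_u (a : kˣ) (b c : k) : Φ a b c u = v (a : k) b c := φ_u _ _ _
-- basis and coordinates
def pb : PowerBasis k (R k) := AdjoinRoot.powerBasis' (monic_X_pow 4)
lemma pb_dim : (pb (k := k)).dim = 4 := by simp [pb]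
def B : Module.Basis (Fin 4) k (R k) := (pb.basis).reindex (finCongr pb_dim)
lemma B_apply (i : Fin 4) : (B i : R k) = u ^ (i : ℕ) := by
  rw [B, Module.Basis.reindex_apply, pb.basis_eq_pow]; rfl
lemma fv0 : ((0 : Fin 4) : ℕ) = 0 := rfl
lemma fv1 : ((1 : Fin 4) : ℕ) = 1 := rfl
lemma fv2 : ((2 : Fin 4) : ℕ) = 2 := rfl
lemma fv3 : ((3 : Fin 4) : ℕ) = 3 := rfl
def co (z : R k) (i : Fin 4) : k := B.repr z i
lemma sum_co (z : R k) : z = ∑ i : Fin 4, am (co z i) * u ^ (i : ℕ) := by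
  conv_lhs => rw [← B.sum_repr z]
  refine Finset.sum_congr rfl fun i _ => ?_
  rw [B_apply, Algebra.smul_def]; rfl
lemma co_sum (d : Fin 4 → k) (j : Fin 4) :
    co (∑ i : Fin 4, am (d i) * u ^ (i : ℕ)) j = d j := by
  have : (∑ i : Fin 4, am (d i) * u ^ (i : ℕ)) = ∑ i : Fin 4, d i • B i := by
    refine Finset.sum_congr rfl fun i _ => ?_
    rw [B_apply, Algebra.smul_def]; rfl
  rw [co, this, B.repr_sum_self]
lemma co_expand (d0 d1 d2 d3 : k) (j : Fin 4) :
    co (am d0 + am d1 * u + am d2 * u ^ 2 + am d3 * u ^ 3) j = ![d0, d1, d2, d3] j := by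
  have h : (am d0 + am d1 * u + am d2 * u ^ 2 + am d3 * u ^ 3 : R k)
      = ∑ i : Fin 4, am (![d0, d1, d2, d3] i) * u ^ (i : ℕ) := by
    rw [Fin.sum_univ_four]
    simp [fv1, fv2, fv3, pow_zero, mul_one]
  rw [h, co_sum]
lemma co_v (a b c : k) (j : Fin 4) : co (v a b c) j = ![0, a, b, c] j := by
  have : v a b c = am 0 + am a * u + am b * u ^ 2 + am c * u ^ 3 := by
    rw [v]; simp [am]
  rw [this, co_expand]
lemma co_u (j : Fin 4) : co (u : R k) j = ![0, 1, 0, 0] j := by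
  have : (u : R k) = am 0 + am 1 * u + am 0 * u ^ 2 + am 0 * u ^ 3 := by simp [am]
  rw [this, co_expand]
-- evaluation at 0
def π : R k →ₐ[k] k := AdjoinRoot.liftAlgHom _ (Algebra.ofId k _) 0 (by simp [eval₂_pow, eval₂_X])
lemma π_u : π (u : R k) = 0 := by
  show AdjoinRoot.liftAlgHom ((X : k[X]) ^ 4) (Algebra.ofId k _) 0 _ (AdjoinRoot.root _) = 0
  exact AdjoinRoot.liftAlgHom_root _ _ _ _
lemma π_am (x : k) : π (am x) = x := by exact π.commutes x
lemma π_eq_co0 (z : R k) : π z = co z 0 := by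
  conv_lhs => rw [sum_co z, Fin.sum_univ_four]
  simp [map_mul, map_pow, π_am, π_u, fv1, fv2, fv3]
-- automorphisms
abbrev Aut (k : Type) [Field k] := R k ≃ₐ[k] R k
lemma aut_ext {e f : Aut k} (h : e u = f u) : e = f := by
  have h2 : (e : R k →ₐ[k] R k) = (f : R k →ₐ[k] R k) :=
    AdjoinRoot.algHom_ext (by rw [u_def]; exact h)
  exact AlgEquiv.ext fun x => by
    have := DFunLike.congr_fun h2 x
    simpa using this
lemma Φ_mul (a₁ : kˣ) (b₁ c₁ : k) (a₂ : kˣ) (b₂ c₂ : k) :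
    Φ a₁ b₁ c₁ * Φ a₂ b₂ c₂ =
      Φ (a₁ * a₂) ((a₂:k) * b₁ + (a₁:k) ^ 2 * b₂)
        ((a₂:k) * c₁ + 2 * (a₁:k) * b₁ * b₂ + (a₁:k) ^ 3 * c₂) := by
  apply aut_ext
  show φ (a₁:k) b₁ c₁ (φ (a₂:k) b₂ c₂ u) = φ ((a₁:k)*(a₂:k)) _ _ u
  rw [← AlgHom.comp_apply, φ_comp]
lemma co0_aut (e : Aut k) : co (e u) 0 = 0 := by
  have h4 : (e u) ^ 4 = 0 := by rw [← map_pow, hu4, map_zero]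
  have h5 : (π (e u)) ^ 4 = 0 := by rw [← map_pow, h4, map_zero]
  have h0 : π (e u) = 0 := by
    exact pow_eq_zero_iff (by norm_num) |>.mp h5
  rw [← π_eq_co0, h0]
lemma aut_u_eq (e : Aut k) : e u = v (co (e u) 1) (co (e u) 2) (co (e u) 3) := by
  conv_lhs => rw [sum_co (e u), Fin.sum_univ_four]
  rw [v]
  simp [co0_aut e, fv1, fv2, fv3]
lemma co1_ne (e : Aut k) : co (e u) 1 ≠ 0 := by
  intro h
  have he : e u = v 0 (co (e u) 2) (co (e u) 3) := by
    have he0 := aut_u_eq e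
    rw [h] at he0
    exact he0
  have hsq : (e u) ^ 2 = 0 := by
    have h2 : v 0 (co (e u) 2) (co (e u) 3) = u ^ 2 * (am (co (e u) 2) + am (co (e u) 3) * u) := by
      rw [v]; simp [am]; ring
    rw [he, h2, mul_pow, ← pow_mul]
    norm_num [hu4]
  have hcube : (e u) ^ 3 = 0 := by
    rw [pow_succ, hsq, zero_mul]
  set q := co (e⁻¹ u) 1 with hq
  set b := co (e u) 2 with hb
  set c := co (e u) 3 with hc
  have h2 : e⁻¹ u = v q (co (e⁻¹ u) 2) (co (e⁻¹ u) 3) := aut_u_eq (e⁻¹)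
  have h3 : u = e (e⁻¹ u) := (e.apply_symm_apply u).symm
  rw [h2] at h3
  rw [show v q (co (e⁻¹ u) 2) (co (e⁻¹ u) 3)
      = am q * u + am (co (e⁻¹ u) 2) * u ^ 2 + am (co (e⁻¹ u) 3) * u ^ 3 from rfl,
    map_add, map_add, map_mul, map_mul, map_mul, map_pow, map_pow] at h3
  have ham : ∀ x : k, e (am x) = am x := fun x => e.commutes x
  rw [ham, ham, ham, hsq, hcube, mul_zero, mul_zero, add_zero, add_zero, he] at h3
  have h4 : (u : R k) = am (q * b) * u ^ 2 + am (q * c) * u ^ 3 := by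
    conv_lhs => rw [h3]
    rw [v]
    simp only [map_mul, map_zero, zero_mul, zero_add]
    ring
  have h5 : co (u : R k) 1 = 0 := by
    have hx : (u : R k) = am 0 + am 0 * u + am (q * b) * u ^ 2 + am (q * c) * u ^ 3 := by
      simpa using h4
    rw [hx, co_expand]
    rfl
  rw [co_u] at h5
  simp at h5

def Da (e : Aut k) : kˣ := Units.mk0 (co (e u) 1) (co1_ne e)
lemma Phi_D (e : Aut k) : Φ (Da e) (co (e u) 2) (co (e u) 3) = e := by
  apply aut_ext
  rw [Φ_u]
  exact (aut_u_eq e).symm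
lemma co_Φ (a : kˣ) (b c : k) (j : Fin 4) : co (Φ a b c u) j = ![0, (a:k), b, c] j := by
  rw [Φ_u, co_v]
lemma Φ_congr {a a' : kˣ} {b c b' c' : k} (h1 : a = a') (h2 : b = b') (h3 : c = c') :
    Φ a b c = Φ a' b' c' := by rw [h1, h2, h3]

-- matrices
def mat (a b c : k) : Matrix (Fin 3) (Fin 3) k := !![a, b, c; 0, a^2, 2*a*b; 0, 0, a^3]
lemma Da_coe (e : Aut k) : ((Da e : kˣ) : k) = co (e u) 1 := rfl
lemma vec4_1 (d0 d1 d2 d3 : k) : ![d0,d1,d2,d3] 1 = d1 := rfl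
lemma vec4_2 (d0 d1 d2 d3 : k) : ![d0,d1,d2,d3] 2 = d2 := rfl
lemma vec4_3 (d0 d1 d2 d3 : k) : ![d0,d1,d2,d3] 3 = d3 := rfl
lemma mat_congr {a b c a' b' c' : k} (h1 : a = a') (h2 : b = b') (h3 : c = c') :
    mat a b c = mat a' b' c' := by rw [h1, h2, h3]
lemma mat_mul (a b c a' b' c' : k) :
    mat a b c * mat a' b' c' = mat (a*a') (a*b' + b*a'^2) (a*c' + 2*a'*b*b' + c*a'^3) := by
  simp only [mat, Matrix.mul_fin_three]
  congr 1
  ring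
lemma mat_one : mat (1:k) 0 0 = 1 := by
  rw [Matrix.one_fin_three]; norm_num [mat]
lemma mat_inj {a b c a' b' c' : k} (h : mat a b c = mat a' b' c') :
    a = a' ∧ b = b' ∧ c = c' := by
  refine ⟨?_, ?_, ?_⟩
  · have := congrFun (congrFun h 0) 0; simpa [mat] using this
  · have := congrFun (congrFun h 0) 1; simpa [mat] using this
  · have := congrFun (congrFun h 0) 2; simpa [mat] using this
def matU (a : kˣ) (b c : k) : Matrix.GeneralLinearGroup (Fin 3) k :=
  ⟨mat (a:k) b c,
   mat ((a:k))⁻¹ (-b * ((a:k))⁻¹^3) (2*b^2*((a:k))⁻¹^5 - c*((a:k))⁻¹^4),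
   by
     rw [mat_mul, ← mat_one]
     have ha : (a : k) ≠ 0 := a.ne_zero
     exact mat_congr (by field_simp) (by field_simp; ring) (by field_simp; ring),
   by
     rw [mat_mul, ← mat_one]
     have ha : (a : k) ≠ 0 := a.ne_zero
     exact mat_congr (by field_simp) (by field_simp; ring) (by field_simp; ring)⟩
def G (k : Type) [Field k] : Subgroup (Matrix.GeneralLinearGroup (Fin 3) k) where
  carrier := {M | ∃ (a : kˣ) (b c : k), (M : Matrix (Fin 3) (Fin 3) k) = mat (a:k) b c}
  mul_mem' := by
    rintro M N ⟨a, b, c, hM⟩ ⟨a', b', c', hN⟩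
    refine ⟨a*a', (a:k)*b' + b*(a':k)^2, (a:k)*c' + 2*(a':k)*b*b' + c*(a':k)^3, ?_⟩
    rw [Units.val_mul, Units.val_mul, hM, hN, mat_mul]
  one_mem' := ⟨1, 0, 0, by rw [Units.val_one, Units.val_one, mat_one]⟩
  inv_mem' := by
    rintro M ⟨a, b, c, hM⟩
    have hMu : M = matU a b c := Units.ext hM
    subst hMu
    exact ⟨a⁻¹, -b * ((a:k))⁻¹^3, 2*b^2*((a:k))⁻¹^5 - c*((a:k))⁻¹^4,
      by rw [Units.val_inv_eq_inv_val]; rfl⟩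
lemma mem_G {M : Matrix.GeneralLinearGroup (Fin 3) k} :
    M ∈ G k ↔ ∃ (a : kˣ) (b c : k), (M : Matrix (Fin 3) (Fin 3) k) = mat (a:k) b c :=
  Iff.rfl

def toG (e : Aut k) : G k :=
  ⟨matU (Da e⁻¹) (co (e⁻¹ u) 2) (co (e⁻¹ u) 3), ⟨Da e⁻¹, co (e⁻¹ u) 2, co (e⁻¹ u) 3, rfl⟩⟩
lemma toG_val (e : Aut k) :
    ((toG e : Matrix.GeneralLinearGroup (Fin 3) k) : Matrix (Fin 3) (Fin 3) k)
      = mat (co (e⁻¹ u) 1) (co (e⁻¹ u) 2) (co (e⁻¹ u) 3) := rfl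
def hEx (g : G k) :
    ∃ (a : kˣ) (b c : k),
      ((g : Matrix.GeneralLinearGroup (Fin 3) k) : Matrix (Fin 3) (Fin 3) k) = mat (a:k) b c :=
  g.2
def ch1 (g : G k) : kˣ := (hEx g).choose
def ch2 (g : G k) : k := (hEx g).choose_spec.choose
def ch3 (g : G k) : k := (hEx g).choose_spec.choose_spec.choose
lemma ch_spec (g : G k) :
    ((g : Matrix.GeneralLinearGroup (Fin 3) k) : Matrix (Fin 3) (Fin 3) k)
      = mat ((ch1 g : k)) (ch2 g) (ch3 g) :=
  (hEx g).choose_spec.choose_spec.choose_spec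
def ofG (g : G k) : Aut k := (Φ (ch1 g) (ch2 g) (ch3 g))⁻¹

lemma left_inv_aut (e : Aut k) : ofG (toG e) = e := by
  have hspec := (ch_spec (toG e)).symm.trans (toG_val e)
  obtain ⟨h1, h2, h3⟩ := mat_inj hspec
  have h1' : ch1 (toG e) = Da e⁻¹ := Units.ext (by rw [h1, Da_coe])
  have hΦ : Φ (ch1 (toG e)) (ch2 (toG e)) (ch3 (toG e)) = e⁻¹ := by
    rw [Φ_congr h1' h2 h3]
    exact Phi_D e⁻¹
  rw [ofG, hΦ, inv_inv]
lemma right_inv_aut (g : G k) : toG (ofG g) = g := by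
  apply Subtype.ext
  apply Units.ext
  rw [toG_val, ofG, inv_inv]
  rw [ch_spec g]
  exact mat_congr (by rw [co_Φ, vec4_1]) (by rw [co_Φ, vec4_2]) (by rw [co_Φ, vec4_3])
lemma map_mul_aut (e f : Aut k) :
    toG (e * f) = toG e * toG f := by
  apply Subtype.ext
  apply Units.ext
  rw [Subgroup.coe_mul, Units.val_mul, toG_val, toG_val, toG_val, mat_mul]
  have h1 : (e * f)⁻¹ =
      Φ (Da f⁻¹ * Da e⁻¹)
        (((Da e⁻¹ : kˣ) : k) * (co (f⁻¹ u) 2) + ((Da f⁻¹ : kˣ) : k)^2 * (co (e⁻¹ u) 2))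
        (((Da e⁻¹ : kˣ) : k) * (co (f⁻¹ u) 3)
          + 2 * ((Da f⁻¹ : kˣ) : k) * (co (f⁻¹ u) 2) * (co (e⁻¹ u) 2)
          + ((Da f⁻¹ : kˣ) : k)^3 * (co (e⁻¹ u) 3)) := by
    conv_lhs => rw [mul_inv_rev, ← Phi_D f⁻¹, ← Phi_D e⁻¹, Φ_mul]
  rw [h1]
  refine mat_congr ?_ ?_ ?_
  · rw [co_Φ, vec4_1, Units.val_mul]; simp only [Da_coe]; ring
  · rw [co_Φ, vec4_2]; simp only [Da_coe]; ring
  · rw [co_Φ, vec4_3]; simp only [Da_coe]; ring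
def autEquivG : Aut k ≃* G k where
  toFun := toG
  invFun := ofG
  left_inv := left_inv_aut
  right_inv := right_inv_aut
  map_mul' := map_mul_aut
end Aut4

theorem aut_polyQuot_fourth_iso_subgroup (k : Type) [Field k] :
    ∃ G : Subgroup (Matrix.GeneralLinearGroup (Fin 3) k),
      (∀ M : Matrix.GeneralLinearGroup (Fin 3) k, M ∈ G ↔ ∃ (a : kˣ) (b c : k),
        (M : Matrix (Fin 3) (Fin 3) k) =
          !![(a : k), b, c; 0, (a : k) ^ 2, 2 * (a : k) * b; 0, 0, (a : k) ^ 3]) ∧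
      Nonempty (((Polynomial k ⧸ Ideal.span {(Polynomial.X : Polynomial k) ^ 4}) ≃ₐ[k]
        (Polynomial k ⧸ Ideal.span {(Polynomial.X : Polynomial k) ^ 4})) ≃* G) := by
  refine ⟨Aut4.G k, fun M => ?_, ⟨Aut4.autEquivG⟩⟩
  rw [Aut4.mem_G]
  rfl
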